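/- Let B(x) = x^r − (k−1) ln x with k,r ≥ 1 and x_0 = ((k−1)/r)^{1/r}. Then e^{B(x_0)}·Γ(k/r)/r ≤ M'_{k,r} := √(2π) exp(−1/(6((k−1)/r + 3/8))) · ((k−1)/r + 1/2)^{1/2} · ((k−1)/r + 1)^{1/r} / k. -/

import Mathlib

open Real Filter

lemma wendel {x s : ℝ} (hx : 0 < x) (hs0 : 0 ≤ s) (hs1 : s ≤ 1) :
    Real.Gamma (x + s) ≤ x ^ s * Real.Gamma x := by
  have hconv := Real.convexOn_log_Gamma
  have h1 : (x : ℝ) ∈ Set.Ioi (0:ℝ) := hx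
  have h2 : (x + 1 : ℝ) ∈ Set.Ioi (0:ℝ) := by simp [Set.mem_Ioi]; linarith
  have key := hconv.2 h1 h2 (by linarith : (0:ℝ) ≤ 1 - s) hs0 (by ring)
  have hxs : (1 - s) • x + s • (x + 1) = x + s := by simp [smul_eq_mul]; ring
  rw [hxs] at key
  simp only [Function.comp_apply, smul_eq_mul] at key
  rw [Real.Gamma_add_one hx.ne'] at key
  have hG : 0 < Real.Gamma x := Real.Gamma_pos_of_pos hx
  have hlog : Real.log (x * Real.Gamma x) = Real.log x + Real.log (Real.Gamma x) :=
    Real.log_mul hx.ne' hG.ne'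
  rw [hlog] at key
  have key2 : Real.log (Real.Gamma (x + s)) ≤ s * Real.log x + Real.log (Real.Gamma x) := by
    nlinarith [key]
  have hGxs : 0 < Real.Gamma (x + s) := Real.Gamma_pos_of_pos (by linarith)
  calc Real.Gamma (x + s) = Real.exp (Real.log (Real.Gamma (x + s))) := (Real.exp_log hGxs).symm
    _ ≤ Real.exp (s * Real.log x + Real.log (Real.Gamma x)) := Real.exp_le_exp.2 key2
    _ = x ^ s * Real.Gamma x := by
        rw [Real.exp_add, Real.exp_log hG, Real.rpow_def_of_pos hx, mul_comm (Real.log x) s]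

lemma log_bound {v : ℝ} (hv0 : 0 ≤ v) (hv1 : v < 1) :
    Real.log (1+v) - Real.log (1-v) ≤ 2*v + 2*v^3/3 + 2*v^5/(5*(1-v^2)) := by
  set F : ℝ → ℝ := fun u => 2*u + 2*u^3/3 + 2*u^5/(5*(1-u^2))
      - (Real.log (1+u) - Real.log (1-u)) with hF
  have hder : ∀ u ∈ Set.Ico (0:ℝ) 1, HasDerivAt F
      (2 + 2*(3*u^2)/3 + (2*(5*u^4) * (5*(1-u^2)) - 2*u^5 * (5*(-(2*u)))) / (5*(1-u^2))^2
        - (1/(1+u) - (-1)/(1-u))) u := by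
    intro u hu
    obtain ⟨hu0, hu1⟩ := hu
    have h1u : (0:ℝ) < 1 + u := by linarith
    have h1u' : (0:ℝ) < 1 - u := by linarith
    have hden : (5:ℝ)*(1-u^2) ≠ 0 := by nlinarith
    have h1 : HasDerivAt (fun u : ℝ => 2*u) 2 u := by
      simpa using (hasDerivAt_id u).const_mul (2:ℝ)
    have h2 : HasDerivAt (fun u : ℝ => 2*u^3/3) (2*(3*u^2)/3) u := by
      simpa using ((hasDerivAt_pow 3 u).const_mul (2:ℝ)).div_const 3
    have h3n : HasDerivAt (fun u : ℝ => 2*u^5) (2*(5*u^4)) u := by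
      simpa using (hasDerivAt_pow 5 u).const_mul (2:ℝ)
    have h3d : HasDerivAt (fun u : ℝ => 5*(1-u^2)) (5*(-(2*u))) u := by
      simpa using ((hasDerivAt_pow 2 u).const_sub (1:ℝ)).const_mul (5:ℝ)
    have h3 := h3n.div h3d hden
    have h4 : HasDerivAt (fun u : ℝ => Real.log (1+u)) (1/(1+u)) u := by
      simpa using (((hasDerivAt_id u).const_add (1:ℝ)).log h1u.ne')
    have h5 : HasDerivAt (fun u : ℝ => Real.log (1-u)) ((-1)/(1-u)) u := by
      simpa using (((hasDerivAt_id u).const_sub (1:ℝ)).log h1u'.ne')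
    exact ((h1.add h2).add h3).sub (h4.sub h5)
  have hmono : MonotoneOn F (Set.Ico (0:ℝ) 1) := by
    apply monotoneOn_of_deriv_nonneg (convex_Ico 0 1)
    · exact fun u hu => ((hder u hu).continuousAt).continuousWithinAt
    · intro u hu
      rw [interior_Ico] at hu
      exact ((hder u ⟨le_of_lt hu.1, hu.2⟩).differentiableAt).differentiableWithinAt
    · intro u hu
      rw [interior_Ico] at hu
      obtain ⟨hu0, hu1⟩ := hu
      rw [(hder u ⟨le_of_lt hu0, hu1⟩).deriv]
      have h1u : (0:ℝ) < 1 + u := by linarith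
      have h1u' : (0:ℝ) < 1 - u := by linarith
      have hden : (0:ℝ) < 1 - u^2 := by nlinarith
      have key : 2 + 2*(3*u^2)/3 + (2*(5*u^4) * (5*(1-u^2)) - 2*u^5 * (5*(-(2*u)))) / (5*(1-u^2))^2
        - (1/(1+u) - (-1)/(1-u)) = (4/5)*u^6/(1-u^2)^2 := by
        field_simp
        ring
      rw [key]
      positivity
  have h0 : F 0 ≤ F v := by
    apply hmono (by constructor <;> norm_num) ⟨hv0, hv1⟩ hv0
  have hF0 : F 0 = 0 := by norm_num [hF]
  rw [hF0] at h0
  simp only [hF] at h0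
  linarith

lemma log_succ_bound {x : ℝ} (hx : 0 < x) :
    Real.log (x+1) - Real.log x ≤ 2/(2*x+1) + 2/(3*(2*x+1)^3) + 1/(10*x*(x+1)*(2*x+1)^3) := by
  have h1 : (0:ℝ) < 2*x+1 := by linarith
  set v : ℝ := 1/(2*x+1) with hv
  have hv0 : (0:ℝ) ≤ v := by positivity
  have hv1 : v < 1 := by rw [hv, div_lt_one h1]; linarith
  have hb := log_bound hv0 hv1
  have e1 : 1 + v = (2*x+2)/(2*x+1) := by rw [hv]; field_simp; ring
  have e2 : 1 - v = (2*x)/(2*x+1) := by rw [hv]; field_simp; ring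
  have l1 : Real.log (1+v) = Real.log (2*x+2) - Real.log (2*x+1) := by
    rw [e1, Real.log_div (by linarith) h1.ne']
  have l2 : Real.log (1-v) = Real.log (2*x) - Real.log (2*x+1) := by
    rw [e2, Real.log_div (by positivity) h1.ne']
  have l3 : Real.log (2*x+2) = Real.log 2 + Real.log (x+1) := by
    rw [show (2*x+2 : ℝ) = 2*(x+1) by ring, Real.log_mul two_ne_zero (by linarith)]
  have l4 : Real.log (2*x) = Real.log 2 + Real.log x := Real.log_mul two_ne_zero hx.ne'
  have rhs_eq : 2*v + 2*v^3/3 + 2*v^5/(5*(1-v^2))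
      = 2/(2*x+1) + 2/(3*(2*x+1)^3) + 1/(10*x*(x+1)*(2*x+1)^3) := by
    rw [hv]
    have h2 : (1:ℝ) - (1/(2*x+1))^2 = (4*x^2+4*x)/(2*x+1)^2 := by field_simp; ring
    rw [h2]
    field_simp
    ring
  rw [l1, l2, l3, l4, rhs_eq] at hb
  linarith

lemma delta_nonneg {t : ℝ} (ht : 0 ≤ t) :
    1/(6*(t+3/8)*(t+11/8)) + (Real.log (2*t+3) - Real.log (2*t+1))/2
      + t*(Real.log (t+1) - Real.log t) ≤ 1 := by
  have hB : Real.log (2*t+3) - Real.log (2*t+1)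
      ≤ 2/(2*t+2) + 2/(3*(2*t+2)^3) + 1/(10*(t+1/2)*(t+3/2)*(2*t+2)^3) := by
    have h := log_succ_bound (x := t+1/2) (by linarith)
    have e1 : Real.log (t+3/2) = Real.log (2*t+3) - Real.log 2 := by
      rw [show (t+3/2 : ℝ) = (2*t+3)/2 by ring, Real.log_div (by linarith) two_ne_zero]
    have e2 : Real.log (t+1/2) = Real.log (2*t+1) - Real.log 2 := by
      rw [show (t+1/2 : ℝ) = (2*t+1)/2 by ring, Real.log_div (by linarith) two_ne_zero]
    rw [show (t+1/2+1:ℝ) = t+3/2 by ring, show (2*(t+1/2)+1:ℝ) = 2*t+2 by ring, e1, e2] at h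
    linarith
  rcases eq_or_lt_of_le ht with h0 | h0
  · subst h0
    norm_num [Real.log_one] at hB ⊢
    linarith
  · have hA : Real.log (t+1) - Real.log t
        ≤ 2/(2*t+1) + 2/(3*(2*t+1)^3) + 1/(10*t*(t+1)*(2*t+1)^3) := log_succ_bound h0
    have hA' : t*(Real.log (t+1) - Real.log t)
        ≤ 2*t/(2*t+1) + 2*t/(3*(2*t+1)^3) + 1/(10*(t+1)*(2*t+1)^3) := by
      have := mul_le_mul_of_nonneg_left hA ht
      have e : t * (2/(2*t+1) + 2/(3*(2*t+1)^3) + 1/(10*t*(t+1)*(2*t+1)^3))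
          = 2*t/(2*t+1) + 2*t/(3*(2*t+1)^3) + 1/(10*(t+1)*(2*t+1)^3) := by
        field_simp
      linarith [e ▸ this]
    have key : 1/(6*(t+3/8)*(t+11/8))
        + (2/(2*t+2) + 2/(3*(2*t+2)^3) + 1/(10*(t+1/2)*(t+3/2)*(2*t+2)^3))/2
        + (2*t/(2*t+1) + 2*t/(3*(2*t+1)^3) + 1/(10*(t+1)*(2*t+1)^3)) ≤ 1 := by
      rw [← sub_nonneg]
      have heq : 1 - (1/(6*(t+3/8)*(t+11/8))
        + (2/(2*t+2) + 2/(3*(2*t+2)^3) + 1/(10*(t+1/2)*(t+3/2)*(2*t+2)^3))/2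
        + (2*t/(2*t+1) + 2*t/(3*(2*t+1)^3) + 1/(10*(t+1)*(2*t+1)^3)))
          = (53/160 + 1063/480*t + 1297/240*t^2 + 507/80*t^3 + 37/10*t^4 + 19/20*t^5 + 1/15*t^6)
            / ((2*t+1)^3*(2*t+2)^3*(2*t+3)*(t+1)*(t+3/8)*(t+11/8)) := by
        field_simp
        ring
      rw [heq]
      positivity
    linarith

noncomputable def fB (t : ℝ) : ℝ :=
  Real.log (Real.sqrt (2*Real.pi)) + t * Real.log t - t + Real.log (t + 1/2) / 2
    - 1/(6*(t+3/8)) - Real.log (Real.Gamma (t+1))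

lemma fB_step {t : ℝ} (ht : 0 ≤ t) : fB (t+1) ≤ fB t := by
  have hd := delta_nonneg ht
  have hGpos : 0 < Real.Gamma (t+1) := Real.Gamma_pos_of_pos (by linarith)
  have e1 : Real.log (Real.Gamma (t+1+1)) = Real.log (t+1) + Real.log (Real.Gamma (t+1)) := by
    rw [Real.Gamma_add_one (by positivity : (t:ℝ)+1 ≠ 0),
      Real.log_mul (by positivity) hGpos.ne']
  have e2 : Real.log (t+1+1/2) = Real.log (2*t+3) - Real.log 2 := by
    rw [show (t+1+1/2 : ℝ) = (2*t+3)/2 by ring, Real.log_div (by linarith) two_ne_zero]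
  have e2' : Real.log (t+1/2) = Real.log (2*t+1) - Real.log 2 := by
    rw [show (t+1/2 : ℝ) = (2*t+1)/2 by ring, Real.log_div (by linarith) two_ne_zero]
  have e3 : (t+1) * Real.log (t+1) = t * Real.log (t+1) + Real.log (t+1) := by ring
  have e4 : 1/(6*(t+3/8)) - 1/(6*(t+1+3/8)) = 1/(6*(t+3/8)*(t+11/8)) := by
    have h1 : (t:ℝ)+3/8 ≠ 0 := by positivity
    have h2 : (t:ℝ)+1+3/8 ≠ 0 := by positivity
    field_simp
    ring
  have e5 : t*(Real.log (t+1) - Real.log t) = t*Real.log (t+1) - t*Real.log t := by ring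
  unfold fB
  linarith

lemma fB_le {t : ℝ} (ht : 0 ≤ t) (n : ℕ) : fB (t+n) ≤ fB t := by
  induction n with
  | zero => simp
  | succ n ih =>
    have : fB (t+n+1) ≤ fB (t+n) := fB_step (by positivity)
    push_cast
    rw [show t + ((n:ℝ)+1) = t + (n:ℝ) + 1 from by ring]
    linarith

lemma tendsto_psi (x : ℝ) (hx : 0 ≤ x) :
    Tendsto (fun N : ℕ => Real.log (Real.sqrt (2*Real.pi)) + (x+N)*Real.log (x+N) - (x+N)
      + Real.log (x+N+1/2)/2 - 1/(6*(x+N+3/8)) - x * Real.log (N+1)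
      - Real.log ((Nat.factorial N : ℝ))) atTop (nhds 0) := by
  have hNat : Tendsto (fun N : ℕ => (N:ℝ)) atTop atTop := tendsto_natCast_atTop_atTop
  -- pieces
  have p1 : Tendsto (fun N : ℕ => Real.log Real.pi/2 - Real.log (Stirling.stirlingSeq N))
      atTop (nhds 0) := by
    have h := (Real.continuousAt_log (by positivity : Real.sqrt Real.pi ≠ 0)).tendsto.comp
      Stirling.tendsto_stirlingSeq_sqrt_pi
    have h2 := (tendsto_const_nhds : Tendsto (fun _ : ℕ => Real.log Real.pi/2) atTop
      (nhds (Real.log Real.pi/2))).sub h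
    simpa [Real.log_sqrt Real.pi_pos.le, Function.comp_def] using h2
  have p2 : Tendsto (fun N : ℕ => (N:ℝ) * Real.log (1+x/N) - x) atTop (nhds 0) := by
    have h := (Real.continuousAt_log (Real.exp_pos x).ne').tendsto.comp
      (Real.tendsto_one_add_div_pow_exp x)
    simp only [Function.comp_def, Real.log_pow, Real.log_exp] at h
    simpa using h.sub (tendsto_const_nhds : Tendsto (fun _ : ℕ => x) atTop (nhds x))
  have hN1 : Tendsto (fun N : ℕ => (N:ℝ)+1) atTop atTop :=
    tendsto_atTop_add_const_right _ 1 hNat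
  have p3 : Tendsto (fun N : ℕ => x * Real.log ((x+N)/(N+1))) atTop (nhds 0) := by
    have hq : Tendsto (fun N : ℕ => (x+N)/((N:ℝ)+1)) atTop (nhds 1) := by
      have h0 : Tendsto (fun N : ℕ => (x-1)/((N:ℝ)+1)) atTop (nhds 0) :=
        Tendsto.div_atTop tendsto_const_nhds hN1
      have heq : ∀ N : ℕ, (x+N)/((N:ℝ)+1) = 1 + (x-1)/((N:ℝ)+1) := by
        intro N
        have : ((N:ℝ)+1) ≠ 0 := by positivity
        field_simp
        ring
      simpa [heq] using (tendsto_const_nhds.add h0 :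
        Tendsto (fun N : ℕ => 1 + (x-1)/((N:ℝ)+1)) atTop (nhds (1+0)))
    have h := (Real.continuousAt_log one_ne_zero).tendsto.comp hq
    simp only [Function.comp_def, Real.log_one] at h
    simpa using (tendsto_const_nhds : Tendsto (fun _ : ℕ => x) atTop (nhds x)).mul h
  have p4 : Tendsto (fun N : ℕ => Real.log (1+(x+1/2)/N)/2) atTop (nhds 0) := by
    have h0 : Tendsto (fun N : ℕ => (x+1/2)/(N:ℝ)) atTop (nhds 0) :=
      Tendsto.div_atTop tendsto_const_nhds hNat
    have h1 : Tendsto (fun N : ℕ => 1+(x+1/2)/(N:ℝ)) atTop (nhds 1) := by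
      simpa using tendsto_const_nhds.add h0
    have h := (Real.continuousAt_log one_ne_zero).tendsto.comp h1
    simp only [Function.comp_def, Real.log_one] at h
    simpa using h.div_const 2
  have p5 : Tendsto (fun N : ℕ => -(1/(6*(x+N+3/8)))) atTop (nhds 0) := by
    have h : Tendsto (fun N : ℕ => 6*(x+(N:ℝ)+3/8)) atTop atTop := by
      apply Tendsto.const_mul_atTop (by norm_num : (0:ℝ) < 6)
      exact tendsto_atTop_add_const_right _ (3/8) (tendsto_atTop_add_const_left _ x hNat)
    have h2 : Tendsto (fun N : ℕ => (1:ℝ)/(6*(x+N+3/8))) atTop (nhds 0) :=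
      Tendsto.div_atTop tendsto_const_nhds h
    simpa only [neg_zero] using h2.neg
  have hsum := ((((p1.add p2).add p3).add p4).add p5)
  simp only [add_zero] at hsum
  apply hsum.congr'
  filter_upwards [eventually_ge_atTop 1] with N hN
  have hNpos : (0:ℝ) < N := by exact_mod_cast hN
  have hfact : Real.log ((Nat.factorial N : ℝ)) = Real.log (Stirling.stirlingSeq N)
      + 1/2*Real.log (2*N) + N*Real.log ((N:ℝ)/Real.exp 1) := by
    have := Stirling.log_stirlingSeq_formula N
    linarith
  have a1 : Real.log ((N:ℝ)/Real.exp 1) = Real.log N - 1 := by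
    rw [Real.log_div hNpos.ne' (Real.exp_ne_zero 1), Real.log_exp]
  have a2 : Real.log (2*(N:ℝ)) = Real.log 2 + Real.log N :=
    Real.log_mul two_ne_zero hNpos.ne'
  have a3 : Real.log (Real.sqrt (2*Real.pi)) = (Real.log 2 + Real.log Real.pi)/2 := by
    rw [Real.log_sqrt (by positivity), Real.log_mul two_ne_zero Real.pi_pos.ne']
  have a4 : Real.log (1+x/(N:ℝ)) = Real.log (x+N) - Real.log N := by
    rw [show 1+x/(N:ℝ) = (x+N)/N by field_simp; ring,
      Real.log_div (by positivity) hNpos.ne']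
  have a5 : Real.log ((x+(N:ℝ))/(N+1)) = Real.log (x+N) - Real.log ((N:ℝ)+1) := by
    rw [Real.log_div (by positivity) (by positivity)]
  have a6 : Real.log (1+(x+1/2)/(N:ℝ)) = Real.log (x+N+1/2) - Real.log N := by
    rw [show 1+(x+1/2)/(N:ℝ) = (x+N+1/2)/N by field_simp; ring,
      Real.log_div (by positivity) hNpos.ne']
  rw [hfact, a1, a2, a3, a4, a5, a6]
  ring



lemma fB_nonneg {t : ℝ} (ht : 0 ≤ t) : 0 ≤ fB t := by
  set m : ℕ := ⌊t⌋₊ with hm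
  set x : ℝ := t - m with hxdef
  have hx0 : 0 ≤ x := sub_nonneg.2 (Nat.floor_le ht)
  have hx1 : x < 1 := by
    have := Nat.lt_floor_add_one t
    rw [hxdef]; linarith
  have hxm : t = x + m := by rw [hxdef]; ring
  clear_value x m
  refine le_of_tendsto (tendsto_psi x hx0) ?_
  filter_upwards [eventually_ge_atTop 1, eventually_ge_atTop m] with N hN1 hNm
  -- step 1 : psi N ≤ fB (x + N)
  have hNpos : (0:ℝ) < N := by exact_mod_cast hN1
  have hwend : Real.Gamma (((N:ℝ)+1) + x) ≤ ((N:ℝ)+1) ^ x * Real.Gamma ((N:ℝ)+1) :=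
    wendel (by positivity) hx0 hx1.le
  have hGamFact : Real.Gamma ((N:ℝ)+1) = (Nat.factorial N : ℝ) := by
    exact_mod_cast Real.Gamma_nat_eq_factorial N
  have hGpos : 0 < Real.Gamma (x + N + 1) := Real.Gamma_pos_of_pos (by positivity)
  have hlog : Real.log (Real.Gamma (x + N + 1)) ≤ x * Real.log ((N:ℝ)+1)
      + Real.log ((Nat.factorial N : ℝ)) := by
    have h1 : Real.Gamma (x + N + 1) ≤ ((N:ℝ)+1) ^ x * (Nat.factorial N : ℝ) := by
      rw [show x + (N:ℝ) + 1 = ((N:ℝ)+1) + x by ring]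
      rw [hGamFact] at hwend
      exact hwend
    calc Real.log (Real.Gamma (x + N + 1)) ≤ Real.log (((N:ℝ)+1) ^ x * (Nat.factorial N : ℝ)) :=
          Real.log_le_log hGpos h1
      _ = x * Real.log ((N:ℝ)+1) + Real.log ((Nat.factorial N : ℝ)) := by
          rw [Real.log_mul (by positivity) (by positivity), Real.log_rpow (by positivity)]
  have step1 : Real.log (Real.sqrt (2*Real.pi)) + (x+N)*Real.log (x+N) - (x+N)
      + Real.log (x+N+1/2)/2 - 1/(6*(x+N+3/8)) - x * Real.log ((N:ℝ)+1)
      - Real.log ((Nat.factorial N : ℝ)) ≤ fB (x + N) := by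
    unfold fB
    linarith
  -- step 2 : fB (x + N) ≤ fB t
  have step2 : fB (x + N) ≤ fB t := by
    have hc : x + (N:ℝ) = t + ((N - m : ℕ) : ℝ) := by
      rw [Nat.cast_sub hNm, hxm]; ring
    rw [hc]
    exact fB_le ht (N - m)
  exact le_trans step1 step2

lemma batir {t : ℝ} (ht : 0 ≤ t) :
    Real.Gamma (t+1) ≤ Real.sqrt (2*Real.pi) * Real.exp (t*Real.log t - t)
      * (t+1/2) ^ ((1:ℝ)/2) * Real.exp (-(1/(6*(t+3/8)))) := by
  have h := fB_nonneg ht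
  unfold fB at h
  have hGpos : 0 < Real.Gamma (t+1) := Real.Gamma_pos_of_pos (by linarith)
  have hlog : Real.log (Real.Gamma (t+1)) ≤ Real.log (Real.sqrt (2*Real.pi))
      + (t*Real.log t - t) + Real.log (t+1/2)/2 + (-(1/(6*(t+3/8)))) := by linarith
  calc Real.Gamma (t+1) = Real.exp (Real.log (Real.Gamma (t+1))) := (Real.exp_log hGpos).symm
    _ ≤ Real.exp (Real.log (Real.sqrt (2*Real.pi)) + (t*Real.log t - t)
          + Real.log (t+1/2)/2 + (-(1/(6*(t+3/8))))) := Real.exp_le_exp.2 hlog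
    _ = Real.sqrt (2*Real.pi) * Real.exp (t*Real.log t - t)
          * (t+1/2) ^ ((1:ℝ)/2) * Real.exp (-(1/(6*(t+3/8)))) := by
        rw [Real.exp_add, Real.exp_add, Real.exp_add, Real.exp_log (by positivity)]
        congr 1
        rw [Real.rpow_def_of_pos (by positivity : (0:ℝ) < t+1/2)]
        ring_nf

/-- With `B(x) = x^r − (k−1) ln x`, `x₀ = ((k−1)/r)^{1/r}` its minimizer, so that
`B(x₀) = ψ((k−1)/r)` with `ψ(x) = x − x log x` (`ψ(0)=0`), we have
`e^{B(x₀)} Γ(k/r)/r ≤ M'_{k,r}`. -/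
theorem gg_inverse_density_bound (k r : ℝ) (hk : 1 ≤ k) (hr : 1 ≤ r) :
    Real.exp ((k - 1) / r - (k - 1) / r * Real.log ((k - 1) / r)) *
        Real.Gamma (k / r) / r ≤
      Real.sqrt (2 * Real.pi) * Real.exp (-(1 / (6 * ((k - 1) / r + 3 / 8)))) *
        ((k - 1) / r + 1 / 2) ^ ((1 : ℝ) / 2) * ((k - 1) / r + 1) ^ (1 / r) / k := by
  have hr0 : (0:ℝ) < r := by linarith
  have hk0 : (0:ℝ) < k := by linarith
  set t : ℝ := (k-1)/r with htdef
  have ht : 0 ≤ t := div_nonneg (by linarith) hr0.le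
  have htr : 0 < t + 1/r := by positivity
  have hkr : k/r = t + 1/r := by rw [htdef]; field_simp; ring
  have hG1 : Real.Gamma (t + 1/r + 1) = (t+1/r) * Real.Gamma (t+1/r) :=
    Real.Gamma_add_one htr.ne'
  have hG2 : Real.Gamma ((t+1) + (1/r)) ≤ (t+1) ^ ((1:ℝ)/r) * Real.Gamma (t+1) :=
    wendel (by linarith) (by positivity) (by rw [div_le_one hr0]; linarith)
  have hB := batir ht
  have hkrr : (t+1/r)*r = k := by rw [htdef]; field_simp; ring
  have e1 : Real.Gamma (k/r) = Real.Gamma ((t+1)+(1/r)) / (t+1/r) := by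
    rw [hkr, show (t+1)+(1/r) = t+1/r+1 by ring, hG1]
    field_simp
  set E : ℝ := Real.exp (t - t * Real.log t) with hE
  have hEpos : 0 < E := Real.exp_pos _
  have e2 : E * Real.Gamma (k/r) / r = E * Real.Gamma ((t+1)+(1/r)) / k := by
    rw [e1, ← hkrr]
    field_simp
  have hEE : E * Real.exp (t*Real.log t - t) = 1 := by
    rw [hE, ← Real.exp_add, show (t - t*Real.log t) + (t*Real.log t - t) = 0 by ring,
      Real.exp_zero]
  have hGpos : (0:ℝ) ≤ Real.Gamma ((t+1)+(1/r)) := (Real.Gamma_pos_of_pos (by positivity)).le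
  calc E * Real.Gamma (k/r) / r = E * Real.Gamma ((t+1)+(1/r)) / k := e2
    _ ≤ E * ((t+1) ^ ((1:ℝ)/r) * Real.Gamma (t+1)) / k := by gcongr
    _ ≤ E * ((t+1) ^ ((1:ℝ)/r) * (Real.sqrt (2*Real.pi) * Real.exp (t*Real.log t - t)
          * (t+1/2) ^ ((1:ℝ)/2) * Real.exp (-(1/(6*(t+3/8)))))) / k := by
        gcongr
    _ = Real.sqrt (2 * Real.pi) * Real.exp (-(1 / (6 * (t + 3 / 8)))) *
        (t + 1 / 2) ^ ((1 : ℝ) / 2) * (t + 1) ^ (1 / r) / k := by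
        rw [show (1:ℝ)/r = ((1:ℝ)/r) from rfl]
        have h9 : ((t:ℝ)+1) ^ ((1:ℝ)/r) = (t+1) ^ (1/r) := rfl
        linear_combination ((t+1) ^ ((1:ℝ)/r) * Real.sqrt (2*Real.pi)
          * (t+1/2) ^ ((1:ℝ)/2) * Real.exp (-(1/(6*(t+3/8)))) / k) * hEE
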